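/- Let a, b, c be the vertices of a triangle in ℝ³ and p, q points strictly on opposite sides of the plane through a, b, c. Then the union of the two tetrahedra conv{a,b,c,p} ∪ conv{a,b,c,q} equals the union of the three tetrahedra conv{a,b,p,q} ∪ conv{b,c,p,q} ∪ conv{c,a,p,q}, provided the segment pq meets the interior of triangle abc. -/

import Mathlib

open Finset

section PachnerAux

lemma pachner_core (α β γ δ x0 x1 x2 x3 : ℝ) (hα : 0 < α) (hβ : 0 < β) (hγ : 0 < γ)
    (hδ : δ < 0) :
    ((0 ≤ x0 ∧ 0 ≤ x1 ∧ 0 ≤ x2 ∧ 0 ≤ x3) ∨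
      (x3 ≤ 0 ∧ δ*x0 ≤ α*x3 ∧ δ*x1 ≤ β*x3 ∧ δ*x2 ≤ γ*x3)) ↔
    ((0 ≤ x2 ∧ α*x2 ≤ γ*x0 ∧ β*x2 ≤ γ*x1 ∧ δ*x2 ≤ γ*x3) ∨
      (0 ≤ x0 ∧ β*x0 ≤ α*x1 ∧ γ*x0 ≤ α*x2 ∧ δ*x0 ≤ α*x3) ∨
      (0 ≤ x1 ∧ α*x1 ≤ β*x0 ∧ γ*x1 ≤ β*x2 ∧ δ*x1 ≤ β*x3)) := by
  constructor
  · intro h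
    have hcom : 0 ≤ x0 ∧ 0 ≤ x1 ∧ 0 ≤ x2 ∧ δ*x0 ≤ α*x3 ∧ δ*x1 ≤ β*x3 ∧ δ*x2 ≤ γ*x3 := by
      rcases h with ⟨h0, h1, h2, h3⟩ | ⟨h0, h1, h2, h3⟩
      · exact ⟨h0, h1, h2, by nlinarith, by nlinarith, by nlinarith⟩
      · refine ⟨by nlinarith, by nlinarith, by nlinarith, h1, h2, h3⟩
    obtain ⟨h0, h1, h2, d0, d1, d2⟩ := hcom
    rcases le_total (α*x2) (γ*x0) with c1 | c1
    · rcases le_total (β*x2) (γ*x1) with c2 | c2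
      · exact Or.inl ⟨h2, c1, c2, d2⟩
      · refine Or.inr (Or.inr ⟨h1, ?_, c2, d1⟩)
        nlinarith [mul_le_mul_of_nonneg_left c2 hα.le, mul_le_mul_of_nonneg_left c1 hβ.le]
    · rcases le_total (β*x0) (α*x1) with c3 | c3
      · exact Or.inr (Or.inl ⟨h0, c3, c1, d0⟩)
      · refine Or.inr (Or.inr ⟨h1, c3, ?_, d1⟩)
        nlinarith [mul_le_mul_of_nonneg_left c3 hγ.le, mul_le_mul_of_nonneg_left c1 hβ.le]
  · intro h
    have hcom : 0 ≤ x0 ∧ 0 ≤ x1 ∧ 0 ≤ x2 ∧ δ*x0 ≤ α*x3 ∧ δ*x1 ≤ β*x3 ∧ δ*x2 ≤ γ*x3 := by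
      rcases h with ⟨h1, h2, h3, h4⟩ | ⟨h1, h2, h3, h4⟩ | ⟨h1, h2, h3, h4⟩
      · refine ⟨by nlinarith, by nlinarith, h1, ?_, ?_, h4⟩
        · nlinarith [mul_le_mul_of_nonpos_left h2 hδ.le, mul_le_mul_of_nonneg_left h4 hα.le]
        · nlinarith [mul_le_mul_of_nonpos_left h3 hδ.le, mul_le_mul_of_nonneg_left h4 hβ.le]
      · refine ⟨h1, by nlinarith, by nlinarith, h4, ?_, ?_⟩
        · nlinarith [mul_le_mul_of_nonpos_left h2 hδ.le, mul_le_mul_of_nonneg_left h4 hβ.le]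
        · nlinarith [mul_le_mul_of_nonpos_left h3 hδ.le, mul_le_mul_of_nonneg_left h4 hγ.le]
      · refine ⟨by nlinarith, h1, by nlinarith, ?_, h4, ?_⟩
        · nlinarith [mul_le_mul_of_nonpos_left h2 hδ.le, mul_le_mul_of_nonneg_left h4 hα.le]
        · nlinarith [mul_le_mul_of_nonpos_left h3 hδ.le, mul_le_mul_of_nonneg_left h4 hγ.le]
    obtain ⟨h0, h1, h2, d0, d1, d2⟩ := hcom
    rcases le_total 0 x3 with c | c
    · exact Or.inl ⟨h0, h1, h2, c⟩
    · exact Or.inr ⟨c, d0, d1, d2⟩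

variable {E : Type*} [NormedAddCommGroup E] [NormedSpace ℝ E]

lemma pachner_affine_comb2 (g : E →ᵃ[ℝ] ℝ) {u v : ℝ} (huv : u + v = 1) (x y : E) :
    g (u • x + v • y) = u * g x + v * g y := by
  have hu : u = 1 - v := by linarith
  subst hu
  have hx : (1 - v) • x + v • y = AffineMap.lineMap x y v := by
    rw [AffineMap.lineMap_apply]
    simp only [vsub_eq_sub, vadd_eq_add, smul_sub, sub_smul, one_smul]
    abel
  rw [hx, AffineMap.apply_lineMap, AffineMap.lineMap_apply]
  simp only [vsub_eq_sub, vadd_eq_add, smul_eq_mul]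
  ring

lemma pachner_affine_apply_sum (g : E →ᵃ[ℝ] ℝ) (w : Fin 4 → ℝ) (v : Fin 4 → E)
    (hw : ∑ j, w j = 1) :
    g (∑ j, w j • v j) = ∑ j, w j * g (v j) := by
  rw [← Finset.univ.affineCombination_eq_linear_combination v w hw,
    Finset.univ.map_affineCombination v w hw g,
    Finset.univ.affineCombination_eq_linear_combination _ _ hw]
  simp [smul_eq_mul, Function.comp]

omit [NormedAddCommGroup E] [NormedSpace ℝ E] in
lemma pachner_range_fin4 (v0 v1 v2 v3 : E) :
    Set.range ![v0, v1, v2, v3] = {v0, v1, v2, v3} := by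
  ext x
  constructor
  · rintro ⟨i, rfl⟩
    fin_cases i <;> simp
  · rintro (rfl | rfl | rfl | rfl)
    exacts [⟨0, rfl⟩, ⟨1, rfl⟩, ⟨2, rfl⟩, ⟨3, rfl⟩]

lemma pachner_mem_hull4 {v0 v1 v2 v3 x : E} :
    x ∈ convexHull ℝ ({v0, v1, v2, v3} : Set E) ↔
      ∃ w : Fin 4 → ℝ, (∀ j, 0 ≤ w j) ∧ w 0 + w 1 + w 2 + w 3 = 1 ∧
        x = w 0 • v0 + w 1 • v1 + w 2 • v2 + w 3 • v3 := by
  classical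
  rw [← pachner_range_fin4, convexHull_range_eq_exists_affineCombination]
  constructor
  · rintro ⟨s, w, hw0, hw1, rfl⟩
    refine ⟨Set.indicator ↑s w, fun j => ?_, ?_, ?_⟩
    · by_cases h : j ∈ s <;> simp [Set.indicator_apply, h, hw0 j]
    · have : ∑ j, Set.indicator (↑s) w j = 1 :=
        (Finset.sum_indicator_subset w (Finset.subset_univ s)).trans hw1
      rw [Fin.sum_univ_four] at this; exact this
    · have hsum : ∑ j, Set.indicator (↑s) w j = 1 :=
        (Finset.sum_indicator_subset w (Finset.subset_univ s)).trans hw1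
      rw [Finset.affineCombination_indicator_subset w _ (Finset.subset_univ s),
        Finset.univ.affineCombination_eq_linear_combination _ _ hsum,
        Fin.sum_univ_four]
      simp
  · rintro ⟨w, hw0, hw1, rfl⟩
    have hsum : ∑ j, w j = 1 := by rw [Fin.sum_univ_four]; exact hw1
    refine ⟨Finset.univ, w, fun i _ => hw0 i, hsum, ?_⟩
    rw [Finset.univ.affineCombination_eq_linear_combination _ _ hsum, Fin.sum_univ_four]
    simp

lemma pachner_apply_comb4 (g : E →ᵃ[ℝ] ℝ) {w0 w1 w2 w3 : ℝ} (hw : w0 + w1 + w2 + w3 = 1)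
    (v0 v1 v2 v3 : E) :
    g (w0 • v0 + w1 • v1 + w2 • v2 + w3 • v3) =
      w0 * g v0 + w1 * g v1 + w2 * g v2 + w3 * g v3 := by
  have h := pachner_affine_apply_sum g ![w0, w1, w2, w3] ![v0, v1, v2, v3]
    (by rw [Fin.sum_univ_four]; simpa using hw)
  rw [Fin.sum_univ_four, Fin.sum_univ_four] at h
  simpa using h

end PachnerAux

set_option maxHeartbeats 8000000 in
/-- Geometric content of the 2→3 Pachner move: if a, b, c, p are affinely
independent in ℝ³, q lies strictly on the opposite side of the plane through
a, b, c from p, and the open segment pq meets the (relative) interior of the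
triangle abc, then the union of the two tetrahedra conv{a,b,c,p} ∪
conv{a,b,c,q} equals the union of the three tetrahedra conv{a,b,p,q} ∪
conv{b,c,p,q} ∪ conv{c,a,p,q}. -/
theorem two_three_pachner_union (a b c p q : EuclideanSpace ℝ (Fin 3))
    (h₁ : AffineIndependent ℝ ![a, b, c, p])
    (h₂ : (affineSpan ℝ ({a, b, c} : Set (EuclideanSpace ℝ (Fin 3)))).SOppSide p q)
    (h₃ : (openSegment ℝ p q ∩
      intrinsicInterior ℝ (convexHull ℝ ({a, b, c} : Set (EuclideanSpace ℝ (Fin 3))))).Nonempty) :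
    convexHull ℝ ({a, b, c, p} : Set (EuclideanSpace ℝ (Fin 3))) ∪
      convexHull ℝ ({a, b, c, q} : Set (EuclideanSpace ℝ (Fin 3))) =
    convexHull ℝ ({a, b, p, q} : Set (EuclideanSpace ℝ (Fin 3))) ∪
      convexHull ℝ ({b, c, p, q} : Set (EuclideanSpace ℝ (Fin 3))) ∪
      convexHull ℝ ({c, a, p, q} : Set (EuclideanSpace ℝ (Fin 3))) := by
  classical
  clear h₂
  have hcard : Fintype.card (Fin 4) = Module.finrank ℝ (EuclideanSpace ℝ (Fin 3)) + 1 := by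
    simp [finrank_euclideanSpace_fin]
  have htop : affineSpan ℝ (Set.range ![a, b, c, p]) = ⊤ :=
    h₁.affineSpan_eq_top_iff_card_eq_finrank_add_one.mpr hcard
  let Φ : AffineBasis (Fin 4) ℝ (EuclideanSpace ℝ (Fin 3)) := ⟨![a, b, c, p], h₁, htop⟩
  let f : Fin 4 → (EuclideanSpace ℝ (Fin 3) →ᵃ[ℝ] ℝ) := fun i => Φ.coord i
  have hva : ∀ i, f i a = if i = 0 then 1 else 0 := fun i => by
    exact Φ.coord_apply i 0
  have hvb : ∀ i, f i b = if i = 1 then 1 else 0 := fun i => by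
    exact Φ.coord_apply i 1
  have hvc : ∀ i, f i c = if i = 2 then 1 else 0 := fun i => by
    exact Φ.coord_apply i 2
  have hvp : ∀ i, f i p = if i = 3 then 1 else 0 := fun i => by
    exact Φ.coord_apply i 3
  have hsum : ∀ x, f 0 x + f 1 x + f 2 x + f 3 x = 1 := fun x => by
    have := Φ.sum_coord_apply_eq_one x
    rw [Fin.sum_univ_four] at this
    exact this
  have hext : ∀ x y : EuclideanSpace ℝ (Fin 3), (∀ i, f i x = f i y) → x = y :=
    fun x y h => Φ.ext_elem h
  set S : Set (EuclideanSpace ℝ (Fin 3)) := convexHull ℝ ({a, b, c} : Set _) with hSdef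
  -- the triangle lies in the zero set of the last coordinate, with the others nonneg
  have hSsub : S ⊆ {x | f 3 x = 0 ∧ 0 ≤ f 0 x ∧ 0 ≤ f 1 x ∧ 0 ≤ f 2 x} := by
    apply convexHull_min
    · intro x hx
      simp only [Set.mem_insert_iff, Set.mem_singleton_iff] at hx
      rcases hx with rfl | rfl | rfl <;>
        simp [hva, hvb, hvc]
    · intro x hx y hy s t hs ht hst
      obtain ⟨h1, h2, h3, h4⟩ := hx
      obtain ⟨k1, k2, k3, k4⟩ := hy
      refine ⟨?_, ?_, ?_, ?_⟩ <;> rw [pachner_affine_comb2 _ hst]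
      · rw [h1, k1]; ring
      · nlinarith [mul_nonneg hs h2, mul_nonneg ht k2]
      · nlinarith [mul_nonneg hs h3, mul_nonneg ht k3]
      · nlinarith [mul_nonneg hs h4, mul_nonneg ht k4]
  obtain ⟨r, hrseg, hrint⟩ := h₃
  have hrS : r ∈ S := intrinsicInterior_subset hrint
  obtain ⟨u, v, hu, hv, huv, hr⟩ := hrseg
  have hcoords : ∀ i, f i r = u * f i p + v * f i q := fun i => by
    rw [← hr]; exact pachner_affine_comb2 (f i) huv p q
  obtain ⟨hr3, hr0, hr1, hr2⟩ := hSsub hrS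
  -- δ < 0
  have hδ : f 3 q < 0 := by
    have h3 : u * f 3 p + v * f 3 q = 0 := by rw [← hcoords 3]; exact hr3
    have hp3 : f 3 p = 1 := by simp [hvp]
    rw [hp3] at h3
    nlinarith
  -- strict positivity of the first three coordinates at r
  have key : ∀ (i : Fin 4) (z : EuclideanSpace ℝ (Fin 3)), z ∈ ({a, b, c} : Set _) →
      f i z = 1 → (∀ w ∈ S, 0 ≤ f i w) → f i r ≠ 0 := by
    intro i z hz hz1 hnonneg h0
    obtain ⟨y, hy, hyr⟩ := mem_intrinsicInterior.mp hrint
    obtain ⟨ε, hε, hball⟩ := Metric.mem_nhds_iff.mp (mem_interior_iff_mem_nhds.mp hy)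
    have hd : (0:ℝ) ≤ dist r z := dist_nonneg
    set θ : ℝ := ε / (2 * (dist r z + 1)) with hθdef
    have hθ : 0 < θ := by positivity
    have hzS : z ∈ S := subset_convexHull ℝ _ hz
    have hmem : AffineMap.lineMap z r (1 + θ) ∈ affineSpan ℝ S :=
      AffineMap.lineMap_mem _ (subset_affineSpan ℝ S hzS) (subset_affineSpan ℝ S hrS)
    set y' : affineSpan ℝ S := ⟨_, hmem⟩ with hy'def
    have hdist : y' ∈ Metric.ball y ε := by
      rw [Metric.mem_ball, Subtype.dist_eq, hyr]
      show dist (AffineMap.lineMap z r (1 + θ)) r < ε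
      have hsub : AffineMap.lineMap z r (1 + θ) - r = θ • (r - z) := by
        rw [AffineMap.lineMap_apply]
        simp only [vsub_eq_sub, vadd_eq_add]
        module
      rw [dist_eq_norm, hsub, norm_smul, Real.norm_eq_abs, abs_of_pos hθ, ← dist_eq_norm]
      have h2 : (0:ℝ) < 2 * (dist r z + 1) := by linarith
      rw [hθdef, div_mul_eq_mul_div, div_lt_iff₀ h2]
      nlinarith
    have hy'S : AffineMap.lineMap z r (1 + θ) ∈ S := hball hdist
    have hge := hnonneg _ hy'S
    rw [AffineMap.apply_lineMap, hz1, h0, AffineMap.lineMap_apply] at hge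
    simp only [vsub_eq_sub, vadd_eq_add, smul_eq_mul] at hge
    nlinarith
  have hq0 : ∀ i, f i q * v = f i r - u * f i p := fun i => by
    rw [hcoords i]; ring
  have hα : 0 < f 0 q := by
    have hne := key 0 a (by simp) (by simp [hva]) (fun w hw => (hSsub hw).2.1)
    have h0 : 0 < f 0 r := lt_of_le_of_ne hr0 (Ne.symm hne)
    have e : f 0 r = u * 0 + v * f 0 q := by
      rw [hcoords 0]; simp [hvp]
    rw [e] at h0
    simp only [mul_zero, zero_add] at h0
    rcases mul_pos_iff.mp h0 with h | h
    · exact h.2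
    · linarith [h.1]
  have hβ : 0 < f 1 q := by
    have hne := key 1 b (by simp) (by simp [hvb]) (fun w hw => (hSsub hw).2.2.1)
    have h0 : 0 < f 1 r := lt_of_le_of_ne hr1 (Ne.symm hne)
    have e : f 1 r = u * 0 + v * f 1 q := by
      rw [hcoords 1]; simp [hvp]
    rw [e] at h0
    simp only [mul_zero, zero_add] at h0
    rcases mul_pos_iff.mp h0 with h | h
    · exact h.2
    · linarith [h.1]
  have hγ : 0 < f 2 q := by
    have hne := key 2 c (by simp) (by simp [hvc]) (fun w hw => (hSsub hw).2.2.2)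
    have h0 : 0 < f 2 r := lt_of_le_of_ne hr2 (Ne.symm hne)
    have e : f 2 r = u * 0 + v * f 2 q := by
      rw [hcoords 2]; simp [hvp]
    rw [e] at h0
    simp only [mul_zero, zero_add] at h0
    rcases mul_pos_iff.mp h0 with h | h
    · exact h.2
    · linarith [h.1]
  have hqs : f 0 q + f 1 q + f 2 q + f 3 q = 1 := hsum q
  -- membership characterizations
  have memTp : ∀ x, x ∈ convexHull ℝ ({a, b, c, p} : Set (EuclideanSpace ℝ (Fin 3))) ↔
      (0 ≤ f 0 x ∧ 0 ≤ f 1 x ∧ 0 ≤ f 2 x ∧ 0 ≤ f 3 x) := by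
    intro x
    rw [pachner_mem_hull4]
    constructor
    · rintro ⟨w, hw0, hw1, rfl⟩
      have e : ∀ i : Fin 4, f i (w 0 • a + w 1 • b + w 2 • c + w 3 • p)
          = w 0 * f i a + w 1 * f i b + w 2 * f i c + w 3 * f i p :=
        fun i => pachner_apply_comb4 (f i) hw1 a b c p
      refine ⟨?_, ?_, ?_, ?_⟩ <;>
        [rw [e 0]; rw [e 1]; rw [e 2]; rw [e 3]] <;>
        simp [hva, hvb, hvc, hvp] <;>
        [exact hw0 0; exact hw0 1; exact hw0 2; exact hw0 3]
    · rintro ⟨h0, h1, h2, h3⟩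
      refine ⟨fun j => f j x, fun j => ?_, hsum x, ?_⟩
      · fin_cases j <;> assumption
      · refine hext x _ fun i => ?_
        rw [pachner_apply_comb4 (f i) (hsum x) a b c p]
        fin_cases i <;> simp [hva, hvb, hvc, hvp]
  have memTq : ∀ x, x ∈ convexHull ℝ ({a, b, c, q} : Set (EuclideanSpace ℝ (Fin 3))) ↔
      (f 3 x ≤ 0 ∧ f 3 q * f 0 x ≤ f 0 q * f 3 x ∧ f 3 q * f 1 x ≤ f 1 q * f 3 x ∧
        f 3 q * f 2 x ≤ f 2 q * f 3 x) := by
    intro x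
    rw [pachner_mem_hull4]
    constructor
    · rintro ⟨w, hw0, hw1, rfl⟩
      have e : ∀ i : Fin 4, f i (w 0 • a + w 1 • b + w 2 • c + w 3 • q)
          = w 0 * f i a + w 1 * f i b + w 2 * f i c + w 3 * f i q :=
        fun i => pachner_apply_comb4 (f i) hw1 a b c q
      have e0 : f 0 (w 0 • a + w 1 • b + w 2 • c + w 3 • q) = w 0 + w 3 * f 0 q := by
        rw [e 0]; simp [hva, hvb, hvc]
      have e1 : f 1 (w 0 • a + w 1 • b + w 2 • c + w 3 • q) = w 1 + w 3 * f 1 q := by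
        rw [e 1]; simp [hva, hvb, hvc]
      have e2 : f 2 (w 0 • a + w 1 • b + w 2 • c + w 3 • q) = w 2 + w 3 * f 2 q := by
        rw [e 2]; simp [hva, hvb, hvc]
      have e3 : f 3 (w 0 • a + w 1 • b + w 2 • c + w 3 • q) = w 3 * f 3 q := by
        rw [e 3]; simp [hva, hvb, hvc]
      rw [e0, e1, e2, e3]
      refine ⟨?_, ?_, ?_, ?_⟩
      · nlinarith [hw0 3]
      · nlinarith [mul_nonneg (hw0 0) (neg_nonneg.mpr hδ.le)]
      · nlinarith [mul_nonneg (hw0 1) (neg_nonneg.mpr hδ.le)]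
      · nlinarith [mul_nonneg (hw0 2) (neg_nonneg.mpr hδ.le)]
    · rintro ⟨h1, h2, h3, h4⟩
      have hsd : f 3 x / f 3 q * f 3 q = f 3 x := div_mul_cancel₀ _ hδ.ne
      have hs0 : 0 ≤ f 3 x / f 3 q := by
        rw [div_nonneg_iff]; right; exact ⟨h1, hδ.le⟩
      have hw0' : 0 ≤ f 0 x - f 3 x / f 3 q * f 0 q := by
        have h' : f 3 x / f 3 q * f 0 q ≤ f 0 x := by
          rw [div_mul_eq_mul_div, div_le_iff_of_neg hδ]; nlinarith
        linarith [h']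
      have hw1' : 0 ≤ f 1 x - f 3 x / f 3 q * f 1 q := by
        have h' : f 3 x / f 3 q * f 1 q ≤ f 1 x := by
          rw [div_mul_eq_mul_div, div_le_iff_of_neg hδ]; nlinarith
        linarith [h']
      have hw2' : 0 ≤ f 2 x - f 3 x / f 3 q * f 2 q := by
        have h' : f 3 x / f 3 q * f 2 q ≤ f 2 x := by
          rw [div_mul_eq_mul_div, div_le_iff_of_neg hδ]; nlinarith
        linarith [h']
      have hwsum : (f 0 x - f 3 x / f 3 q * f 0 q) + (f 1 x - f 3 x / f 3 q * f 1 q) +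
          (f 2 x - f 3 x / f 3 q * f 2 q) + f 3 x / f 3 q = 1 := by
        linear_combination hsum x + hsd - (f 3 x / f 3 q) * hqs
      refine ⟨![f 0 x - f 3 x / f 3 q * f 0 q, f 1 x - f 3 x / f 3 q * f 1 q,
        f 2 x - f 3 x / f 3 q * f 2 q, f 3 x / f 3 q], fun j => ?_, by simpa using hwsum, ?_⟩
      · fin_cases j <;> simp <;> linarith
      · simp only [Matrix.cons_val_zero, Matrix.cons_val_one, Matrix.head_cons,
          Matrix.cons_val_two, Matrix.tail_cons, Matrix.cons_val_three, Matrix.head_fin_const]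
        refine hext x _ fun i => ?_
        rw [pachner_apply_comb4 (f i) hwsum a b c q]
        fin_cases i <;> simp [hva, hvb, hvc] <;> linear_combination -hsd
  have memTab : ∀ x, x ∈ convexHull ℝ ({a, b, p, q} : Set (EuclideanSpace ℝ (Fin 3))) ↔
      (0 ≤ f 2 x ∧ f 0 q * f 2 x ≤ f 2 q * f 0 x ∧ f 1 q * f 2 x ≤ f 2 q * f 1 x ∧
        f 3 q * f 2 x ≤ f 2 q * f 3 x) := by
    intro x
    rw [pachner_mem_hull4]
    constructor
    · rintro ⟨w, hw0, hw1, rfl⟩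
      have e : ∀ i : Fin 4, f i (w 0 • a + w 1 • b + w 2 • p + w 3 • q)
          = w 0 * f i a + w 1 * f i b + w 2 * f i p + w 3 * f i q :=
        fun i => pachner_apply_comb4 (f i) hw1 a b p q
      have e0 : f 0 (w 0 • a + w 1 • b + w 2 • p + w 3 • q) = w 0 + w 3 * f 0 q := by
        rw [e 0]; simp [hva, hvb, hvp]
      have e1 : f 1 (w 0 • a + w 1 • b + w 2 • p + w 3 • q) = w 1 + w 3 * f 1 q := by
        rw [e 1]; simp [hva, hvb, hvp]
      have e2 : f 2 (w 0 • a + w 1 • b + w 2 • p + w 3 • q) = w 3 * f 2 q := by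
        rw [e 2]; simp [hva, hvb, hvp]
      have e3 : f 3 (w 0 • a + w 1 • b + w 2 • p + w 3 • q) = w 2 + w 3 * f 3 q := by
        rw [e 3]; simp [hva, hvb, hvp]
      rw [e0, e1, e2, e3]
      refine ⟨?_, ?_, ?_, ?_⟩
      · nlinarith [hw0 3]
      · nlinarith [mul_nonneg (hw0 0) hγ.le, mul_nonneg (hw0 3) hγ.le]
      · nlinarith [mul_nonneg (hw0 1) hγ.le]
      · nlinarith [mul_nonneg (hw0 2) hγ.le]
    · rintro ⟨h1, h2, h3, h4⟩
      have hsd : f 2 x / f 2 q * f 2 q = f 2 x := div_mul_cancel₀ _ hγ.ne'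
      have hs0 : 0 ≤ f 2 x / f 2 q := div_nonneg h1 hγ.le
      have hw0' : 0 ≤ f 0 x - f 2 x / f 2 q * f 0 q := by
        have h' : f 2 x / f 2 q * f 0 q ≤ f 0 x := by
          rw [div_mul_eq_mul_div, div_le_iff₀ hγ]; nlinarith
        linarith [h']
      have hw1' : 0 ≤ f 1 x - f 2 x / f 2 q * f 1 q := by
        have h' : f 2 x / f 2 q * f 1 q ≤ f 1 x := by
          rw [div_mul_eq_mul_div, div_le_iff₀ hγ]; nlinarith
        linarith [h']
      have hw2' : 0 ≤ f 3 x - f 2 x / f 2 q * f 3 q := by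
        have h' : f 2 x / f 2 q * f 3 q ≤ f 3 x := by
          rw [div_mul_eq_mul_div, div_le_iff₀ hγ]; nlinarith
        linarith [h']
      have hwsum : (f 0 x - f 2 x / f 2 q * f 0 q) + (f 1 x - f 2 x / f 2 q * f 1 q) +
          (f 3 x - f 2 x / f 2 q * f 3 q) + f 2 x / f 2 q = 1 := by
        linear_combination hsum x + hsd - (f 2 x / f 2 q) * hqs
      refine ⟨![f 0 x - f 2 x / f 2 q * f 0 q, f 1 x - f 2 x / f 2 q * f 1 q,
        f 3 x - f 2 x / f 2 q * f 3 q, f 2 x / f 2 q], fun j => ?_, by simpa using hwsum, ?_⟩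
      · fin_cases j <;> simp <;> linarith
      · simp only [Matrix.cons_val_zero, Matrix.cons_val_one, Matrix.head_cons,
          Matrix.cons_val_two, Matrix.tail_cons, Matrix.cons_val_three, Matrix.head_fin_const]
        refine hext x _ fun i => ?_
        rw [pachner_apply_comb4 (f i) hwsum a b p q]
        fin_cases i <;> simp [hva, hvb, hvp] <;> linear_combination -hsd
  have memTbc : ∀ x, x ∈ convexHull ℝ ({b, c, p, q} : Set (EuclideanSpace ℝ (Fin 3))) ↔
      (0 ≤ f 0 x ∧ f 1 q * f 0 x ≤ f 0 q * f 1 x ∧ f 2 q * f 0 x ≤ f 0 q * f 2 x ∧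
        f 3 q * f 0 x ≤ f 0 q * f 3 x) := by
    intro x
    rw [pachner_mem_hull4]
    constructor
    · rintro ⟨w, hw0, hw1, rfl⟩
      have e : ∀ i : Fin 4, f i (w 0 • b + w 1 • c + w 2 • p + w 3 • q)
          = w 0 * f i b + w 1 * f i c + w 2 * f i p + w 3 * f i q :=
        fun i => pachner_apply_comb4 (f i) hw1 b c p q
      have e0 : f 0 (w 0 • b + w 1 • c + w 2 • p + w 3 • q) = w 3 * f 0 q := by
        rw [e 0]; simp [hvb, hvc, hvp]
      have e1 : f 1 (w 0 • b + w 1 • c + w 2 • p + w 3 • q) = w 0 + w 3 * f 1 q := by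
        rw [e 1]; simp [hvb, hvc, hvp]
      have e2 : f 2 (w 0 • b + w 1 • c + w 2 • p + w 3 • q) = w 1 + w 3 * f 2 q := by
        rw [e 2]; simp [hvb, hvc, hvp]
      have e3 : f 3 (w 0 • b + w 1 • c + w 2 • p + w 3 • q) = w 2 + w 3 * f 3 q := by
        rw [e 3]; simp [hvb, hvc, hvp]
      rw [e0, e1, e2, e3]
      refine ⟨?_, ?_, ?_, ?_⟩
      · nlinarith [hw0 3]
      · nlinarith [mul_nonneg (hw0 0) hα.le]
      · nlinarith [mul_nonneg (hw0 1) hα.le]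
      · nlinarith [mul_nonneg (hw0 2) hα.le]
    · rintro ⟨h1, h2, h3, h4⟩
      have hsd : f 0 x / f 0 q * f 0 q = f 0 x := div_mul_cancel₀ _ hα.ne'
      have hs0 : 0 ≤ f 0 x / f 0 q := div_nonneg h1 hα.le
      have hw0' : 0 ≤ f 1 x - f 0 x / f 0 q * f 1 q := by
        have h' : f 0 x / f 0 q * f 1 q ≤ f 1 x := by
          rw [div_mul_eq_mul_div, div_le_iff₀ hα]; nlinarith
        linarith [h']
      have hw1' : 0 ≤ f 2 x - f 0 x / f 0 q * f 2 q := by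
        have h' : f 0 x / f 0 q * f 2 q ≤ f 2 x := by
          rw [div_mul_eq_mul_div, div_le_iff₀ hα]; nlinarith
        linarith [h']
      have hw2' : 0 ≤ f 3 x - f 0 x / f 0 q * f 3 q := by
        have h' : f 0 x / f 0 q * f 3 q ≤ f 3 x := by
          rw [div_mul_eq_mul_div, div_le_iff₀ hα]; nlinarith
        linarith [h']
      have hwsum : (f 1 x - f 0 x / f 0 q * f 1 q) + (f 2 x - f 0 x / f 0 q * f 2 q) +
          (f 3 x - f 0 x / f 0 q * f 3 q) + f 0 x / f 0 q = 1 := by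
        linear_combination hsum x + hsd - (f 0 x / f 0 q) * hqs
      refine ⟨![f 1 x - f 0 x / f 0 q * f 1 q, f 2 x - f 0 x / f 0 q * f 2 q,
        f 3 x - f 0 x / f 0 q * f 3 q, f 0 x / f 0 q], fun j => ?_, by simpa using hwsum, ?_⟩
      · fin_cases j <;> simp <;> linarith
      · simp only [Matrix.cons_val_zero, Matrix.cons_val_one, Matrix.head_cons,
          Matrix.cons_val_two, Matrix.tail_cons, Matrix.cons_val_three, Matrix.head_fin_const]
        refine hext x _ fun i => ?_
        rw [pachner_apply_comb4 (f i) hwsum b c p q]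
        fin_cases i <;> simp [hvb, hvc, hvp] <;> linear_combination -hsd
  have memTca : ∀ x, x ∈ convexHull ℝ ({c, a, p, q} : Set (EuclideanSpace ℝ (Fin 3))) ↔
      (0 ≤ f 1 x ∧ f 0 q * f 1 x ≤ f 1 q * f 0 x ∧ f 2 q * f 1 x ≤ f 1 q * f 2 x ∧
        f 3 q * f 1 x ≤ f 1 q * f 3 x) := by
    intro x
    rw [pachner_mem_hull4]
    constructor
    · rintro ⟨w, hw0, hw1, rfl⟩
      have e : ∀ i : Fin 4, f i (w 0 • c + w 1 • a + w 2 • p + w 3 • q)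
          = w 0 * f i c + w 1 * f i a + w 2 * f i p + w 3 * f i q :=
        fun i => pachner_apply_comb4 (f i) hw1 c a p q
      have e0 : f 0 (w 0 • c + w 1 • a + w 2 • p + w 3 • q) = w 1 + w 3 * f 0 q := by
        rw [e 0]; simp [hva, hvc, hvp]
      have e1 : f 1 (w 0 • c + w 1 • a + w 2 • p + w 3 • q) = w 3 * f 1 q := by
        rw [e 1]; simp [hva, hvc, hvp]
      have e2 : f 2 (w 0 • c + w 1 • a + w 2 • p + w 3 • q) = w 0 + w 3 * f 2 q := by
        rw [e 2]; simp [hva, hvc, hvp]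
      have e3 : f 3 (w 0 • c + w 1 • a + w 2 • p + w 3 • q) = w 2 + w 3 * f 3 q := by
        rw [e 3]; simp [hva, hvc, hvp]
      rw [e0, e1, e2, e3]
      refine ⟨?_, ?_, ?_, ?_⟩
      · nlinarith [hw0 3]
      · nlinarith [mul_nonneg (hw0 1) hβ.le]
      · nlinarith [mul_nonneg (hw0 0) hβ.le]
      · nlinarith [mul_nonneg (hw0 2) hβ.le]
    · rintro ⟨h1, h2, h3, h4⟩
      have hsd : f 1 x / f 1 q * f 1 q = f 1 x := div_mul_cancel₀ _ hβ.ne'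
      have hs0 : 0 ≤ f 1 x / f 1 q := div_nonneg h1 hβ.le
      have hw0' : 0 ≤ f 2 x - f 1 x / f 1 q * f 2 q := by
        have h' : f 1 x / f 1 q * f 2 q ≤ f 2 x := by
          rw [div_mul_eq_mul_div, div_le_iff₀ hβ]; nlinarith
        linarith [h']
      have hw1' : 0 ≤ f 0 x - f 1 x / f 1 q * f 0 q := by
        have h' : f 1 x / f 1 q * f 0 q ≤ f 0 x := by
          rw [div_mul_eq_mul_div, div_le_iff₀ hβ]; nlinarith
        linarith [h']
      have hw2' : 0 ≤ f 3 x - f 1 x / f 1 q * f 3 q := by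
        have h' : f 1 x / f 1 q * f 3 q ≤ f 3 x := by
          rw [div_mul_eq_mul_div, div_le_iff₀ hβ]; nlinarith
        linarith [h']
      have hwsum : (f 2 x - f 1 x / f 1 q * f 2 q) + (f 0 x - f 1 x / f 1 q * f 0 q) +
          (f 3 x - f 1 x / f 1 q * f 3 q) + f 1 x / f 1 q = 1 := by
        linear_combination hsum x + hsd - (f 1 x / f 1 q) * hqs
      refine ⟨![f 2 x - f 1 x / f 1 q * f 2 q, f 0 x - f 1 x / f 1 q * f 0 q,
        f 3 x - f 1 x / f 1 q * f 3 q, f 1 x / f 1 q], fun j => ?_, by simpa using hwsum, ?_⟩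
      · fin_cases j <;> simp <;> linarith
      · simp only [Matrix.cons_val_zero, Matrix.cons_val_one, Matrix.head_cons,
          Matrix.cons_val_two, Matrix.tail_cons, Matrix.cons_val_three, Matrix.head_fin_const]
        refine hext x _ fun i => ?_
        rw [pachner_apply_comb4 (f i) hwsum c a p q]
        fin_cases i <;> simp [hva, hvc, hvp] <;> linear_combination -hsd
  -- assemble
  ext x
  simp only [Set.mem_union]
  rw [memTp x, memTq x, memTab x, memTbc x, memTca x, or_assoc]
  exact pachner_core (f 0 q) (f 1 q) (f 2 q) (f 3 q) (f 0 x) (f 1 x) (f 2 x) (f 3 x)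
    hα hβ hγ hδ
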